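/- Let G = (V_0 ∪ V_1, E, c) be a (k_0,k_1)-semiregular network such that every vertex i ∈ V_0 satisfies Σ_{j∈V_0} c(i,j) = r_0 (hence Σ_{j∈V_1} c(i,j) = k_0 - r_0), and every vertex i ∈ V_1 satisfies Σ_{j∈V_1} c(i,j) = r_1 (hence Σ_{j∈V_0} c(i,j) = k_1 - r_1). Then the vector w = k - (vol(G)/n)·1 is an eigenvector of the combinatorial Laplacian with eigenvalue γ = (n/n_0)(k_1 - r_1) = (n/n_1)(k_0 - r_0), where n_0 = |V_0|, n_1 = |V_1|, n = n_0 + n_1. -/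

import Mathlib

open Matrix Finset

/-- A `(k₀,k₁)`-semiregular network with constant within-part degree sums `r₀`, `r₁`
is slightly regular: `w = k - (vol/n)·1` is an eigenvector of the combinatorial Laplacian
with eigenvalue `γ = (n/n₀)(k₁ - r₁) = (n/n₁)(k₀ - r₀)`. -/
theorem semiregular_slightly_regular {n : ℕ}
    (c : Matrix (Fin n) (Fin n) ℝ) (hsym : c.IsSymm) (hnonneg : ∀ i j, 0 ≤ c i j)
    (V0 : Finset (Fin n))
    (n0 n1 : ℕ) (hn0 : n0 = V0.card) (hn1 : n1 = V0ᶜ.card)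
    (hn0pos : 0 < n0) (hn1pos : 0 < n1)
    (k : Fin n → ℝ) (hk : ∀ i, k i = ∑ j, c i j)
    (k0 k1 r0 r1 : ℝ)
    (hdeg0 : ∀ i ∈ V0, k i = k0) (hdeg1 : ∀ i ∈ V0ᶜ, k i = k1)
    (hr0 : ∀ i ∈ V0, ∑ j ∈ V0, c i j = r0)
    (hr1 : ∀ i ∈ V0ᶜ, ∑ j ∈ V0ᶜ, c i j = r1)
    (vol : ℝ) (hvol : vol = ∑ i, k i)
    (L : Matrix (Fin n) (Fin n) ℝ) (hL : L = Matrix.diagonal k - c)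
    (w : Fin n → ℝ) (hw : w = fun i => k i - vol / n) :
    L.mulVec w = (((n : ℝ) / n0) * (k1 - r1)) • w ∧
      ((n : ℝ) / n0) * (k1 - r1) = ((n : ℝ) / n1) * (k0 - r0) := by
  have hsplit : ∀ i, ∑ j ∈ V0, c i j + ∑ j ∈ V0ᶜ, c i j = k i := by
    intro i; rw [hk]; exact Finset.sum_add_sum_compl V0 _
  have hnsum : n0 + n1 = n := by
    rw [hn0, hn1, V0.card_add_card_compl, Fintype.card_fin]
  have hNn : (n : ℝ) = (n0 : ℝ) + n1 := by push_cast [← hnsum]; ring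
  have hn0R : (n0 : ℝ) ≠ 0 := by positivity
  have hn1R : (n1 : ℝ) ≠ 0 := by positivity
  have hnR : (n : ℝ) ≠ 0 := by
    rw [hNn]; positivity
  -- cross degree sums
  have hc0 : ∀ i ∈ V0, ∑ j ∈ V0ᶜ, c i j = k0 - r0 := by
    intro i hi
    have := hsplit i
    rw [hr0 i hi, hdeg0 i hi] at this; linarith
  have hc1 : ∀ i ∈ V0ᶜ, ∑ j ∈ V0, c i j = k1 - r1 := by
    intro i hi
    have := hsplit i
    rw [hr1 i hi, hdeg1 i hi] at this; linarith
  have hvol' : vol = n0 * k0 + n1 * k1 := by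
    rw [hvol, ← Finset.sum_add_sum_compl V0 k,
      Finset.sum_congr rfl hdeg0, Finset.sum_congr rfl hdeg1,
      Finset.sum_const, Finset.sum_const, ← hn0, ← hn1, nsmul_eq_mul, nsmul_eq_mul]
  have hS : (n0 : ℝ) * (k0 - r0) = (n1 : ℝ) * (k1 - r1) := by
    have h1 : ∑ i ∈ V0, ∑ j ∈ V0ᶜ, c i j = (n0 : ℝ) * (k0 - r0) := by
      rw [Finset.sum_congr rfl hc0, Finset.sum_const, ← hn0, nsmul_eq_mul]
    have h2 : ∑ i ∈ V0ᶜ, ∑ j ∈ V0, c i j = (n1 : ℝ) * (k1 - r1) := by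
      rw [Finset.sum_congr rfl hc1, Finset.sum_const, ← hn1, nsmul_eq_mul]
    rw [← h1, ← h2]
    refine (Finset.sum_comm).trans ?_
    refine Finset.sum_congr rfl fun j hj => Finset.sum_congr rfl fun i hi => ?_
    exact hsym.apply j i
  have hgam : ((n : ℝ) / n0) * (k1 - r1) = ((n : ℝ) / n1) * (k0 - r0) := by
    rw [div_mul_eq_mul_div, div_mul_eq_mul_div, div_eq_div_iff hn0R hn1R]
    linear_combination (n : ℝ) * hS.symm
  have hv0 : k0 - vol / (n : ℝ) = (n1 : ℝ) * (k0 - k1) / n := by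
    rw [hvol', hNn]; field_simp; ring
  have hv1 : k1 - vol / (n : ℝ) = (n0 : ℝ) * (k1 - k0) / n := by
    rw [hvol', hNn]; field_simp; ring
  refine ⟨?_, hgam⟩
  funext i
  rw [hL, Matrix.sub_mulVec, Pi.sub_apply, Matrix.mulVec_diagonal]
  have hmv : c.mulVec w i = ∑ j, c i j * w j := rfl
  rw [hmv, ← Finset.sum_add_sum_compl V0 (fun j => c i j * w j)]
  have e0 : ∑ j ∈ V0, c i j * w j = (∑ j ∈ V0, c i j) * (k0 - vol / n) := by
    rw [Finset.sum_mul]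
    refine Finset.sum_congr rfl fun j hj => ?_
    rw [hw]; simp only []; rw [hdeg0 j hj]
  have e1 : ∑ j ∈ V0ᶜ, c i j * w j = (∑ j ∈ V0ᶜ, c i j) * (k1 - vol / n) := by
    rw [Finset.sum_mul]
    refine Finset.sum_congr rfl fun j hj => ?_
    rw [hw]; simp only []; rw [hdeg1 j hj]
  rw [e0, e1, hw]
  simp only [Pi.smul_apply, smul_eq_mul]
  by_cases hi : i ∈ V0
  · rw [hr0 i hi, hc0 i hi, hdeg0 i hi, hv0, hv1, hgam, hNn]
    field_simp
    ring
  · rw [hr1 i (Finset.mem_compl.mpr hi), hc1 i (Finset.mem_compl.mpr hi),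
      hdeg1 i (Finset.mem_compl.mpr hi), hv0, hv1, hNn]
    field_simp
    ring
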